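/- Let V be a 2σ0-dimensional F_p-vector space with a non-degenerate, non-neutral symmetric bilinear form and let K ⊆ V ⊗ k be a strictly characteristic subspace, i.e. a characteristic subspace with K ∩ V = 0 (Artin invariant σ0). Assume that the subspace l_K = K ∩ φ(K) ∩ ⋯ ∩ φ^{σ0−1}(K) is 1-dimensional over k, and let e be a generator of l_K. Then the assignment B + K ↦ ⟨B, φ^{−(σ0−1)}(e)⟩ is a well-defined isomorphism of abelian groups from U(K) = {B ∈ V ⊗ k : B − φ(B) ∈ K + φ(K)}/K onto the additive group (k, +). -/

import Mathlib

open TensorProduct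

section Basics

variable (p : ℕ) [Fact p.Prime]
variable (k : Type*) [Field k] [CharP k p] [Algebra (ZMod p) k]

/-- The `p`-th power map on `k` as a `ZMod p`-linear map. -/
noncomputable def frobL : k →ₗ[ZMod p] k where
  toFun x := x ^ p
  map_add' x y := add_pow_char x y p
  map_smul' c x := by
    simp only [Algebra.smul_def, mul_pow, RingHom.id_apply]
    congr 1
    rw [← map_pow, ZMod.pow_card]

@[simp] lemma frobL_apply (x : k) : frobL p k x = x ^ p := rfl

instance frobSurj [IsAlgClosed k] : RingHomSurjective (frobenius k p) := by
  constructor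
  intro y
  obtain ⟨z, hz⟩ := IsAlgClosed.exists_pow_nat_eq y (n := p) (Fact.out (p := p.Prime)).pos
  exact ⟨z, by simpa [frobenius_def] using hz⟩

variable (V : Type*) [AddCommGroup V] [Module (ZMod p) V]

private lemma rT_smul (c : k) (m : k ⊗[ZMod p] V) :
    LinearMap.rTensor V (frobL p k) (c • m) = c ^ p • LinearMap.rTensor V (frobL p k) m := by
  induction m using TensorProduct.induction_on with
  | zero => simp
  | tmul a x => simp [TensorProduct.smul_tmul', smul_eq_mul, mul_pow]
  | add x y hx hy => simp [smul_add, hx, hy]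

/-- The Frobenius-semilinear bijection `φ` of `k ⊗ V` determined by `φ(s ⊗ x) = s^p ⊗ x`. -/
noncomputable def phiT : (k ⊗[ZMod p] V) →ₛₗ[frobenius k p] (k ⊗[ZMod p] V) where
  toFun := LinearMap.rTensor V (frobL p k)
  map_add' x y := map_add _ x y
  map_smul' c m := by
    show LinearMap.rTensor V (frobL p k) (c • m) = (frobenius k p) c • LinearMap.rTensor V (frobL p k) m
    rw [rT_smul, frobenius_def]

@[simp] lemma phiT_apply (m : k ⊗[ZMod p] V) :
    phiT p k V m = LinearMap.rTensor V (frobL p k) m := rfl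

/-- A bilinear form is non-degenerate if its radical is zero. -/
def Nondeg {R M : Type*} [CommSemiring R] [AddCommMonoid M] [Module R M]
    (b : M →ₗ[R] M →ₗ[R] R) : Prop :=
  ∀ x, (∀ y, b x y = 0) → x = 0

/-- A bilinear form is non-neutral if there is no totally isotropic subspace of half
dimension. -/
def NonNeutral {R M : Type*} [CommRing R] [AddCommGroup M] [Module R M]
    (b : M →ₗ[R] M →ₗ[R] R) : Prop :=
  ¬ ∃ W : Submodule R M, (∀ x ∈ W, ∀ y ∈ W, b x y = 0) ∧
      2 * Module.finrank R ↥W = Module.finrank R M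

variable {p k V}

/-- A characteristic subspace of `V ⊗ k`, where `dim V = 2σ₀`: a totally isotropic
`k`-subspace of dimension `σ₀` with `dim (K + φ K) = σ₀ + 1`. -/
def IsCharSub [IsAlgClosed k] (σ₀ : ℕ) (b : LinearMap.BilinForm (ZMod p) V)
    (K : Submodule k (k ⊗[ZMod p] V)) : Prop :=
  (∀ x ∈ K, ∀ y ∈ K, b.baseChange k x y = 0) ∧
  Module.finrank k ↥K = σ₀ ∧
  Module.finrank k ↥(K ⊔ K.map (phiT p k V)) = σ₀ + 1

/-- `{x ∈ V : x ⊗ 1 ∈ K}` as an `𝔽_p`-subspace of `V`. -/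
def KcapV (K : Submodule k (k ⊗[ZMod p] V)) : Submodule (ZMod p) V where
  carrier := {x | (1 : k) ⊗ₜ[ZMod p] x ∈ K}
  add_mem' := by
    intro a b ha hb
    simp only [Set.mem_setOf_eq] at *
    rw [TensorProduct.tmul_add]
    exact K.add_mem ha hb
  zero_mem' := by
    simp only [Set.mem_setOf_eq, TensorProduct.tmul_zero]
    exact K.zero_mem
  smul_mem' := by
    intro c x hx
    simp only [Set.mem_setOf_eq] at *
    rw [TensorProduct.tmul_smul]
    exact K.smul_of_tower_mem c hx

end Basics

section Quot

variable {p : ℕ} [Fact p.Prime]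
variable {Vt : Type*} [AddCommGroup Vt] [Module (ZMod p) Vt]

/-- The orthogonal complement of a vector. -/
def perp (b : LinearMap.BilinForm (ZMod p) Vt) (v : Vt) : Submodule (ZMod p) Vt :=
  LinearMap.ker (b v)

lemma self_mem_perp {b : LinearMap.BilinForm (ZMod p) Vt} {v : Vt} (hv : b v v = 0) :
    v ∈ perp b v := LinearMap.mem_ker.mpr hv

/-- The line spanned by an isotropic vector `v`, inside `v^⊥`. -/
noncomputable def lineV (b : LinearMap.BilinForm (ZMod p) Vt) (v : Vt) (hv : b v v = 0) :
    Submodule (ZMod p) (perp b v) :=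
  Submodule.span (ZMod p) {⟨v, self_mem_perp hv⟩}

lemma lineV_le (b : LinearMap.BilinForm (ZMod p) Vt) (v : Vt) (hv : b v v = 0)
    {P : Submodule (ZMod p) (perp b v)}
    (h : (⟨v, self_mem_perp hv⟩ : perp b v) ∈ P) : lineV b v hv ≤ P :=
  Submodule.span_le.mpr (Set.singleton_subset_iff.mpr h)

/-- The quotient `v^⊥ / ⟨v⟩`. -/
noncomputable abbrev Vquot (b : LinearMap.BilinForm (ZMod p) Vt) (v : Vt)
    (hv : b v v = 0) := (perp b v) ⧸ (lineV b v hv)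

/-- Restriction of the form to `v^⊥`. -/
noncomputable def bRes (b : LinearMap.BilinForm (ZMod p) Vt) (v : Vt) :
    LinearMap.BilinForm (ZMod p) (perp b v) :=
  b.compl₁₂ (perp b v).subtype (perp b v).subtype

lemma bRes_apply (b : LinearMap.BilinForm (ZMod p) Vt) (v : Vt) (x y : perp b v) :
    bRes b v x y = b x y := by
  simp [bRes]

noncomputable def bQuotAux (b : LinearMap.BilinForm (ZMod p) Vt) (v : Vt)
    (hsymm : ∀ x y, b x y = b y x) (hv : b v v = 0) :
    (perp b v) →ₗ[ZMod p] (Vquot b v hv) →ₗ[ZMod p] (ZMod p) where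
  toFun x := Submodule.liftQ (lineV b v hv) (bRes b v x) (lineV_le b v hv (by
    rw [LinearMap.mem_ker, bRes_apply, hsymm]
    exact LinearMap.mem_ker.mp x.2))
  map_add' x y := by
    apply LinearMap.ext
    intro z
    obtain ⟨w, rfl⟩ := Submodule.Quotient.mk_surjective _ z
    simp only [Submodule.liftQ_apply, LinearMap.add_apply, bRes_apply,
      Submodule.coe_add, map_add]
  map_smul' c x := by
    apply LinearMap.ext
    intro z
    obtain ⟨w, rfl⟩ := Submodule.Quotient.mk_surjective _ z
    simp only [Submodule.liftQ_apply, LinearMap.smul_apply, bRes_apply,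
      Submodule.coe_smul, map_smul, RingHom.id_apply, smul_eq_mul]

/-- The symmetric bilinear form induced on `v^⊥/⟨v⟩` by the form of `Ṽ`. -/
noncomputable def bQuot (b : LinearMap.BilinForm (ZMod p) Vt) (v : Vt)
    (hsymm : ∀ x y, b x y = b y x) (hv : b v v = 0) :
    LinearMap.BilinForm (ZMod p) (Vquot b v hv) :=
  Submodule.liftQ (lineV b v hv) (bQuotAux b v hsymm hv) (lineV_le b v hv (by
    rw [LinearMap.mem_ker]
    apply LinearMap.ext
    intro z
    obtain ⟨w, rfl⟩ := Submodule.Quotient.mk_surjective _ z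
    simp only [bQuotAux, LinearMap.coe_mk, AddHom.coe_mk, Submodule.liftQ_apply,
      bRes_apply, LinearMap.zero_apply]
    exact LinearMap.mem_ker.mp w.2))

variable (k : Type*) [Field k] [CharP k p] [Algebra (ZMod p) k]

/-- The base change to `k` of the inclusion `v^⊥ ⊆ Ṽ`. -/
noncomputable def iotaPerp (b : LinearMap.BilinForm (ZMod p) Vt) (v : Vt) :
    (k ⊗[ZMod p] ↥(perp b v)) →ₗ[k] (k ⊗[ZMod p] Vt) :=
  LinearMap.baseChange k (perp b v).subtype

/-- The base change to `k` of the quotient map `v^⊥ → v^⊥/⟨v⟩`. -/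
noncomputable def qMap (b : LinearMap.BilinForm (ZMod p) Vt) (v : Vt) (hv : b v v = 0) :
    (k ⊗[ZMod p] ↥(perp b v)) →ₗ[k] (k ⊗[ZMod p] (Vquot b v hv)) :=
  LinearMap.baseChange k (lineV b v hv).mkQ

/-- `π_v(K̃)`: the image of `K̃ ∩ (v^⊥ ⊗ k)` under the quotient map
`v^⊥ ⊗ k → (v^⊥/⟨v⟩) ⊗ k`. -/
noncomputable def piV (b : LinearMap.BilinForm (ZMod p) Vt) (v : Vt) (hv : b v v = 0)
    (K : Submodule k (k ⊗[ZMod p] Vt)) : Submodule k (k ⊗[ZMod p] (Vquot b v hv)) :=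
  (K.comap (iotaPerp k b v)).map (qMap k b v hv)

end Quot
section Decomp

variable {p : ℕ} [Fact p.Prime]
variable {k : Type*} [Field k] [CharP k p] [Algebra (ZMod p) k]
variable {V Vt : Type*} [AddCommGroup V] [Module (ZMod p) V]
  [AddCommGroup Vt] [Module (ZMod p) Vt]

/-- The characteristic subspace `K(B)` of `Ṽ ⊗ k` attached to a characteristic subspace
`K ⊆ V ⊗ k` and a vector `B ∈ V ⊗ k`: the span of `{x + ⟨x,B⟩v : x ∈ K}` together with
`w + B + (B²/2)v`. -/
noncomputable def KB (bV : LinearMap.BilinForm (ZMod p) V) (j : V →ₗ[ZMod p] Vt)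
    (v w : Vt) (K : Submodule k (k ⊗[ZMod p] V)) (B : k ⊗[ZMod p] V) :
    Submodule k (k ⊗[ZMod p] Vt) :=
  Submodule.span k
    (((fun x => LinearMap.baseChange k j x + (bV.baseChange k x B) • ((1 : k) ⊗ₜ[ZMod p] v)) '' K) ∪
      {(1 : k) ⊗ₜ[ZMod p] w + LinearMap.baseChange k j B +
        ((bV.baseChange k B B) / 2) • ((1 : k) ⊗ₜ[ZMod p] v)})

/-- `π_v(K̃)` computed using the fixed orthogonal decomposition `Ṽ = V ⊕ ⟨v,w⟩`:
the subspace of those `x ∈ V ⊗ k` admitting a lift `x + c·(v ⊗ 1)` lying in `K̃`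
(equivalently, whose image in `Ṽ ⊗ k` lies in `K̃ + ⟨v ⊗ 1⟩`). -/
noncomputable def projSub (j : V →ₗ[ZMod p] Vt) (v : Vt)
    (Kt : Submodule k (k ⊗[ZMod p] Vt)) : Submodule k (k ⊗[ZMod p] V) :=
  (Kt ⊔ Submodule.span k {(1 : k) ⊗ₜ[ZMod p] v}).comap (LinearMap.baseChange k j)

lemma mem_projSub {j : V →ₗ[ZMod p] Vt} {v : Vt} {Kt : Submodule k (k ⊗[ZMod p] Vt)}
    (x : k ⊗[ZMod p] V) (c : k)
    (h : LinearMap.baseChange k j x + c • ((1 : k) ⊗ₜ[ZMod p] v) ∈ Kt) :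
    x ∈ projSub j v Kt := by
  have : LinearMap.baseChange k j x
      = (LinearMap.baseChange k j x + c • ((1 : k) ⊗ₜ[ZMod p] v))
        + (-c) • ((1 : k) ⊗ₜ[ZMod p] v) := by
    first | module | simp [add_assoc, ← add_smul] | (rw [add_assoc, ← add_smul]; simp)
  rw [projSub, Submodule.mem_comap, this]
  exact Submodule.add_mem _ (Submodule.mem_sup_left h)
    (Submodule.mem_sup_right (Submodule.smul_mem _ _ (Submodule.mem_span_singleton_self _)))

variable [IsAlgClosed k]

/-- The condition `B - φ(B) ∈ K + φ(K)` defining `U(K)` before quotienting. -/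
def UCond (K : Submodule k (k ⊗[ZMod p] V)) (B : k ⊗[ZMod p] V) : Prop :=
  B - phiT p k V B ∈ K ⊔ K.map (phiT p k V)

/-- `{B ∈ V ⊗ k : B - φ(B) ∈ K + φ(K)}` as an additive group. -/
def Ugrp (K : Submodule k (k ⊗[ZMod p] V)) : AddSubgroup (k ⊗[ZMod p] V) where
  carrier := {B | B - phiT p k V B ∈ K ⊔ K.map (phiT p k V)}
  add_mem' := by
    intro a b ha hb
    simp only [Set.mem_setOf_eq] at *
    have e : a + b - phiT p k V (a + b) = (a - phiT p k V a) + (b - phiT p k V b) := by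
      rw [map_add]; abel
    rw [e]; exact Submodule.add_mem _ ha hb
  zero_mem' := by
    simp only [Set.mem_setOf_eq, map_zero, sub_zero]
    exact Submodule.zero_mem _
  neg_mem' := by
    intro a ha
    simp only [Set.mem_setOf_eq] at *
    have e : -a - phiT p k V (-a) = -(a - phiT p k V a) := by
      rw [map_neg]; abel
    rw [e]; exact Submodule.neg_mem _ ha

lemma mem_Ugrp {K : Submodule k (k ⊗[ZMod p] V)} {B : k ⊗[ZMod p] V} :
    B ∈ Ugrp K ↔ B - phiT p k V B ∈ K ⊔ K.map (phiT p k V) := Iff.rfl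

/-- The group `U(K) = {B : B - φ(B) ∈ K + φ(K)}/K`. -/
noncomputable abbrev UK (K : Submodule k (k ⊗[ZMod p] V)) :=
  (↥(Ugrp K)) ⧸ ((K.toAddSubgroup).addSubgroupOf (Ugrp K))

lemma one_tmul_mem_Ugrp (K : Submodule k (k ⊗[ZMod p] V)) (x : V) :
    (1 : k) ⊗ₜ[ZMod p] x ∈ Ugrp K := by
  have h : phiT p k V ((1 : k) ⊗ₜ[ZMod p] x) = (1 : k) ⊗ₜ[ZMod p] x := by
    rw [phiT_apply, LinearMap.rTensor_tmul, frobL_apply, one_pow]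
  rw [mem_Ugrp, h, sub_self]
  exact Submodule.zero_mem _

/-- The natural map `V → U(K)`, `x ↦ (x ⊗ 1) mod K`. -/
noncomputable def toUK (K : Submodule k (k ⊗[ZMod p] V)) : V →+ UK K :=
  (QuotientAddGroup.mk' ((K.toAddSubgroup).addSubgroupOf (Ugrp K))).comp
    (AddMonoidHom.codRestrict
      (((TensorProduct.mk (ZMod p) k V) (1 : k)).toAddMonoidHom) (Ugrp K)
      (fun x => one_tmul_mem_Ugrp K x))

/-- Iterates `φ^i(K)`. -/
noncomputable def phiPow (i : ℕ) (K : Submodule k (k ⊗[ZMod p] V)) :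
    Submodule k (k ⊗[ZMod p] V) :=
  (fun S : Submodule k (k ⊗[ZMod p] V) => S.map (phiT p k V))^[i] K

end Decomp


section AuxProof

variable {p : ℕ} [Fact p.Prime]
variable {k : Type*} [Field k] [IsAlgClosed k] [CharP k p] [Algebra (ZMod p) k]
variable {V : Type*} [AddCommGroup V] [Module (ZMod p) V]

lemma phi_tmul (c : k) (x : V) :
    phiT p k V (c ⊗ₜ[ZMod p] x) = (c ^ p) ⊗ₜ[ZMod p] x := by
  simp [phiT_apply]

lemma phi_smul (c : k) (m : k ⊗[ZMod p] V) :
    phiT p k V (c • m) = c ^ p • phiT p k V m := rT_smul p k V c m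

lemma phi_bijective : Function.Bijective (phiT p k V) := by
  have hb : Function.Bijective (frobL p k) := by
    constructor
    · intro x y hxy
      exact frobenius_inj k p hxy
    · intro y
      obtain ⟨x, hx⟩ := RingHomSurjective.is_surjective (σ := frobenius k p) y
      exact ⟨x, hx⟩
  let e : k ≃ₗ[ZMod p] k := LinearEquiv.ofBijective (frobL p k) hb
  have hcoe : ∀ m, phiT p k V m = TensorProduct.congr e (LinearEquiv.refl (ZMod p) V) m := by
    intro m
    induction m using TensorProduct.induction_on with
    | zero => simp
    | tmul a x => simp [phi_tmul, TensorProduct.congr_tmul, e, LinearEquiv.ofBijective_apply]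
    | add x y hx hy => simp only [map_add, hx, hy]
  have hbij := (TensorProduct.congr e (LinearEquiv.refl (ZMod p) V)).bijective
  constructor
  · intro a b hab
    apply hbij.1
    rw [← hcoe, ← hcoe, hab]
  · intro y
    obtain ⟨x, hx⟩ := hbij.2 y
    exact ⟨x, by rw [hcoe]; exact hx⟩

lemma pair_phi (bV : LinearMap.BilinForm (ZMod p) V) (x y : k ⊗[ZMod p] V) :
    bV.baseChange k (phiT p k V x) (phiT p k V y) = (bV.baseChange k x y) ^ p := by
  have hp : p ≠ 0 := (Fact.out (p := p.Prime)).ne_zero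
  induction x using TensorProduct.induction_on with
  | zero => simp [zero_pow hp]
  | add x₁ x₂ h₁ h₂ =>
    simp only [map_add, LinearMap.add_apply, h₁, h₂, add_pow_char]
  | tmul a u =>
    induction y using TensorProduct.induction_on with
    | zero => simp [zero_pow hp]
    | add y₁ y₂ h₁ h₂ => simp only [map_add, h₁, h₂, add_pow_char]
    | tmul c v =>
      rw [phi_tmul, phi_tmul, LinearMap.BilinForm.baseChange_tmul,
        LinearMap.BilinForm.baseChange_tmul]
      rw [Algebra.smul_def, Algebra.smul_def, mul_pow, mul_pow, ← map_pow, ZMod.pow_card]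

lemma pair_symm (bV : LinearMap.BilinForm (ZMod p) V) (hsymm : ∀ x y, bV x y = bV y x)
    (x y : k ⊗[ZMod p] V) : bV.baseChange k x y = bV.baseChange k y x := by
  induction x using TensorProduct.induction_on with
  | zero => simp
  | add x₁ x₂ h₁ h₂ => simp only [map_add, LinearMap.add_apply, h₁, h₂]
  | tmul a u =>
    induction y using TensorProduct.induction_on with
    | zero => simp
    | add y₁ y₂ h₁ h₂ => simp only [map_add, LinearMap.add_apply, h₁, h₂]
    | tmul c v =>
      rw [LinearMap.BilinForm.baseChange_tmul, LinearMap.BilinForm.baseChange_tmul,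
        hsymm u v, mul_comm]

lemma pow_p_eq_self_exists (x : k) (hx : x ^ p = x) :
    ∃ a : ZMod p, algebraMap (ZMod p) k a = x := by
  classical
  by_contra hcon
  push_neg at hcon
  have hp1 : 1 < p := (Fact.out (p := p.Prime)).one_lt
  set q : Polynomial k := Polynomial.X ^ p - Polynomial.X with hq
  have hq0 : q ≠ 0 := FiniteField.X_pow_card_sub_X_ne_zero k hp1
  have hdeg : q.natDegree = p := FiniteField.X_pow_card_sub_X_natDegree_eq k hp1
  have hinj : Function.Injective (algebraMap (ZMod p) k) := (algebraMap (ZMod p) k).injective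
  set S : Finset k := insert x (Finset.univ.image (algebraMap (ZMod p) k)) with hS
  have hxnot : x ∉ Finset.univ.image (algebraMap (ZMod p) k) := by
    simp only [Finset.mem_image, Finset.mem_univ, true_and]
    rintro ⟨a, ha⟩
    exact hcon a ha
  have hcard : S.card = p + 1 := by
    rw [hS, Finset.card_insert_of_notMem hxnot,
      Finset.card_image_of_injective _ hinj, Finset.card_univ, ZMod.card]
  have hsub : S ⊆ q.roots.toFinset := by
    intro y hy
    rw [Multiset.mem_toFinset, Polynomial.mem_roots hq0]
    rw [hS, Finset.mem_insert] at hy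
    rcases hy with rfl | hy
    · simp [q, Polynomial.IsRoot, sub_eq_zero, hx]
    · obtain ⟨a, -, rfl⟩ := Finset.mem_image.mp hy
      simp only [q, Polynomial.IsRoot, Polynomial.eval_sub, Polynomial.eval_pow,
        Polynomial.eval_X, sub_eq_zero]
      rw [← map_pow, ZMod.pow_card]
  have h1 := Finset.card_le_card hsub
  have h2 := q.roots.toFinset.card_le_card (le_refl _)
  have h3 : q.roots.toFinset.card ≤ q.roots.card := Multiset.toFinset_card_le _
  have h4 : q.roots.card ≤ q.natDegree := Polynomial.card_roots' q
  omega


lemma span_isotropic {F M : Type*} [Field F] [AddCommGroup M] [Module F M]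
    (b : LinearMap.BilinForm F M) (s : Set M) (h : ∀ x ∈ s, ∀ y ∈ s, b x y = 0) :
    ∀ x ∈ Submodule.span F s, ∀ y ∈ Submodule.span F s, b x y = 0 := by
  intro x hx y hy
  induction hx, hy using Submodule.span_induction₂ with
  | mem_mem u v hu hv => exact h u hu v hv
  | zero_left => simp
  | zero_right => simp
  | add_left u v w _ _ _ h1 h2 => simp [map_add, LinearMap.add_apply, h1, h2]
  | add_right u v w _ _ _ h1 h2 => simp [map_add, h1, h2]
  | smul_left c u v _ _ h1 => simp [map_smul, LinearMap.smul_apply, h1]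
  | smul_right c u v _ _ h1 => simp [map_smul, h1]

lemma phi_iter_zero (n : ℕ) :
    (fun m => phiT p k V m)^[n] (0 : k ⊗[ZMod p] V) = 0 :=
  Function.iterate_fixed (by simp) n

lemma phi_iter_injective (n : ℕ) :
    Function.Injective ((fun m => phiT p k V m)^[n]) :=
  Function.Injective.iterate (phi_bijective (p := p) (k := k) (V := V)).1 n

lemma mem_phiPow_iff {i : ℕ} {K : Submodule k (k ⊗[ZMod p] V)} {y : k ⊗[ZMod p] V} :
    y ∈ phiPow i K ↔ ∃ x ∈ K, (fun m => phiT p k V m)^[i] x = y := by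
  induction i generalizing y with
  | zero => simp [phiPow]
  | succ i ih =>
    have hstep : phiPow (i + 1) K = (phiPow i K).map (phiT p k V) := by
      unfold phiPow
      rw [Function.iterate_succ_apply']
    rw [hstep]
    constructor
    · rintro ⟨z, hz, rfl⟩
      obtain ⟨x, hx, rfl⟩ := ih.mp hz
      exact ⟨x, hx, by rw [Function.iterate_succ_apply']⟩
    · rintro ⟨x, hx, rfl⟩
      exact ⟨(fun m => phiT p k V m)^[i] x, ih.mpr ⟨x, hx, rfl⟩,
        (Function.iterate_succ_apply' _ _ _).symm⟩

lemma stable_exists_point [FiniteDimensional (ZMod p) V]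
    (W : Submodule k (k ⊗[ZMod p] V))
    (hW : ∀ w ∈ W, phiT p k V w ∈ W) (hne : W ≠ ⊥) :
    ∃ x : V, x ≠ 0 ∧ (1 : k) ⊗ₜ[ZMod p] x ∈ W := by
  classical
  set bv := Module.Free.chooseBasis (ZMod p) V with hbv
  set bk := Algebra.TensorProduct.basis k bv with hbk
  have hrepr : ∀ m : k ⊗[ZMod p] V, ∀ i, bk.repr (phiT p k V m) i = (bk.repr m i) ^ p := by
    intro m
    have hsum : phiT p k V m = ∑ i, (bk.repr m i) ^ p • bk i := by
      conv_lhs => rw [← bk.sum_repr m]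
      rw [map_sum]
      refine Finset.sum_congr rfl fun i _ => ?_
      rw [phi_smul]
      congr 1
      rw [hbk, Algebra.TensorProduct.basis_apply, phi_tmul, one_pow]
    intro i
    rw [hsum, bk.repr_sum_self]
  suffices H : ∀ n : ℕ, ∀ w, w ∈ W → w ≠ 0 → (bk.repr w).support.card ≤ n →
      ∃ x : V, x ≠ 0 ∧ (1 : k) ⊗ₜ[ZMod p] x ∈ W by
    obtain ⟨w0, hw0W, hw00⟩ := Submodule.exists_mem_ne_zero_of_ne_bot hne
    exact H _ w0 hw0W hw00 le_rfl
  intro n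
  induction n with
  | zero =>
    intro w hwW hw0 hcard
    exfalso
    apply hw0
    have : bk.repr w = 0 := by
      ext i
      by_contra hi
      have : i ∈ (bk.repr w).support := Finsupp.mem_support_iff.mpr hi
      have := Finset.card_pos.mpr ⟨i, this⟩
      omega
    have := congrArg bk.repr.symm this
    simpa using this
  | succ n ih =>
    intro w hwW hw0 hcard
    have hsupp : (bk.repr w).support.Nonempty := by
      rw [Finsupp.support_nonempty_iff]
      intro h
      apply hw0
      have := congrArg bk.repr.symm h
      simpa using this
    obtain ⟨i0, hi0⟩ := hsupp
    have hc0 : bk.repr w i0 ≠ 0 := Finsupp.mem_support_iff.mp hi0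
    set c0 : k := bk.repr w i0 with hc0def
    set w' := c0⁻¹ • w with hw'def
    have hw'W : w' ∈ W := W.smul_mem _ hwW
    have hw'0 : w' ≠ 0 := smul_ne_zero (inv_ne_zero hc0) hw0
    have hw'repr : ∀ i, bk.repr w' i = c0⁻¹ * bk.repr w i := by
      intro i; rw [hw'def, map_smul]; rfl
    have hw'i0 : bk.repr w' i0 = 1 := by
      rw [hw'repr, inv_mul_cancel₀ hc0]
    set u := phiT p k V w' - w' with hudef
    have huW : u ∈ W := W.sub_mem (hW _ hw'W) hw'W
    have hurepr : ∀ i, bk.repr u i = (bk.repr w' i) ^ p - bk.repr w' i := by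
      intro i; rw [hudef, map_sub, Finsupp.sub_apply, hrepr]
    by_cases hu0 : u = 0
    · have hfix : ∀ i, (bk.repr w' i) ^ p = bk.repr w' i := by
        intro i
        have h := hurepr i
        rw [hu0] at h
        simp only [map_zero, Finsupp.coe_zero, Pi.zero_apply] at h
        exact sub_eq_zero.mp h.symm
      choose a ha using fun i => pow_p_eq_self_exists (bk.repr w' i) (hfix i)
      have hxw : (1 : k) ⊗ₜ[ZMod p] (∑ i, a i • bv i) = w' := by
        rw [TensorProduct.tmul_sum]
        conv_rhs => rw [← bk.sum_repr w']
        refine Finset.sum_congr rfl fun i _ => ?_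
        rw [TensorProduct.tmul_smul, ← ha i, hbk, Algebra.TensorProduct.basis_apply,
          algebraMap_smul]
      refine ⟨∑ i, a i • bv i, ?_, by rw [hxw]; exact hw'W⟩
      intro h0
      apply hw'0
      rw [← hxw, h0, TensorProduct.tmul_zero]
    · have husub : (bk.repr u).support ⊆ (bk.repr w).support.erase i0 := by
        intro i hi
        have hiu : bk.repr u i ≠ 0 := Finsupp.mem_support_iff.mp hi
        have hine : i ≠ i0 := by
          intro h
          apply hiu
          rw [h, hurepr, hw'i0, one_pow, sub_self]
        refine Finset.mem_erase.mpr ⟨hine, Finsupp.mem_support_iff.mpr ?_⟩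
        intro hw0i
        apply hiu
        rw [hurepr, hw'repr, hw0i, mul_zero, zero_pow (Fact.out (p := p.Prime)).ne_zero,
          sub_zero]
      have hcards : (bk.repr u).support.card ≤ n := by
        have h1 := Finset.card_le_card husub
        have h2 : ((bk.repr w).support.erase i0).card = (bk.repr w).support.card - 1 :=
          Finset.card_erase_of_mem hi0
        have h3 := Finset.card_pos.mpr ⟨i0, hi0⟩
        omega
      exact ih u huW hu0 hcards


/-- The family `φ^[j] e'`. -/
noncomputable def Efam {p : ℕ} [Fact p.Prime] {k : Type*} [Field k] [CharP k p]
    [Algebra (ZMod p) k] {V : Type*} [AddCommGroup V] [Module (ZMod p) V]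
    (e' : k ⊗[ZMod p] V) (j : ℕ) : k ⊗[ZMod p] V :=
  (fun m => phiT p k V m)^[j] e'

lemma Efam_zero (e' : k ⊗[ZMod p] V) : Efam e' 0 = e' := rfl

lemma Efam_succ (e' : k ⊗[ZMod p] V) (j : ℕ) :
    Efam e' (j + 1) = phiT p k V (Efam e' j) :=
  Function.iterate_succ_apply' _ j e'

lemma baseChange_nondeg [FiniteDimensional (ZMod p) V]
    (bV : LinearMap.BilinForm (ZMod p) V) (hnd : Nondeg bV) :
    (bV.baseChange k).Nondegenerate := by
  classical
  set bv := Module.Free.chooseBasis (ZMod p) V with hbv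
  set bk := Algebra.TensorProduct.basis k bv with hbk
  have h1 : bV.Nondegenerate :=
    LinearMap.BilinForm.Nondegenerate.ofSeparatingLeft hnd
  rw [LinearMap.BilinForm.nondegenerate_iff_det_ne_zero bk]
  rw [LinearMap.BilinForm.nondegenerate_iff_det_ne_zero bv] at h1
  have hmat : LinearMap.BilinForm.toMatrix bk (bV.baseChange k)
      = (algebraMap (ZMod p) k).mapMatrix (LinearMap.BilinForm.toMatrix bv bV) := by
    ext i j
    rw [LinearMap.BilinForm.toMatrix_apply, RingHom.mapMatrix_apply, Matrix.map_apply,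
      LinearMap.BilinForm.toMatrix_apply, hbk, Algebra.TensorProduct.basis_apply,
      Algebra.TensorProduct.basis_apply, LinearMap.BilinForm.baseChange_tmul]
    rw [mul_one, Algebra.smul_def, mul_one]
  rw [hmat, ← RingHom.map_det]
  intro h0
  exact h1 ((map_eq_zero_iff _ (algebraMap (ZMod p) k).injective).mp h0)

lemma efam_linearIndependent [FiniteDimensional (ZMod p) V]
    (bV : LinearMap.BilinForm (ZMod p) V) (σ0 : ℕ) (K : Submodule k (k ⊗[ZMod p] V))
    (e' : k ⊗[ZMod p] V)
    (hσ : 1 ≤ σ0)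
    (hsymm : ∀ x y, bV x y = bV y x) (hnd : Nondeg bV)
    (hdim : Module.finrank (ZMod p) V = 2 * σ0)
    (hK : IsCharSub σ0 bV K) (hstrict : KcapV K = ⊥)
    (he0 : e' ≠ 0)
    (hEK : ∀ j < σ0, Efam e' j ∈ K) :
    LinearIndependent k (fun i : Fin (2 * σ0) => Efam e' (i : ℕ)) := by
  classical
  have hFD : FiniteDimensional k (k ⊗[ZMod p] V) :=
    Module.Finite.of_basis (Algebra.TensorProduct.basis k (Module.Free.chooseBasis (ZMod p) V))
  have hrk : Module.finrank k (k ⊗[ZMod p] V) = 2 * σ0 := by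
    rw [Module.finrank_baseChange, hdim]
  have hbnd : (bV.baseChange k).Nondegenerate := baseChange_nondeg bV hnd
  have hrefl : (bV.baseChange k).IsRefl := by
    intro x y h
    rw [pair_symm bV hsymm] at h
    exact h
  suffices H : ∀ n : ℕ, n ≤ 2 * σ0 → LinearIndependent k (fun i : Fin n => Efam e' (i : ℕ)) by
    exact H _ le_rfl
  intro n
  induction n with
  | zero => intro _; exact linearIndependent_empty_type
  | succ n ih =>
    intro hn
    have hprev := ih (by omega)
    have hfam : (fun i : Fin (n+1) => Efam e' (i : ℕ))
        = Fin.snoc (fun i : Fin n => Efam e' (i : ℕ)) (Efam e' n) := by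
      funext i
      refine Fin.lastCases ?_ ?_ i
      · simp [Fin.snoc_last, Fin.val_last]
      · intro j
        simp [Fin.snoc_castSucc]
    rw [hfam, linearIndependent_fin_snoc]
    refine ⟨hprev, ?_⟩
    intro hmem
    set W := Submodule.span k (Set.range fun i : Fin n => Efam e' (i : ℕ)) with hWdef
    have hstab : ∀ w ∈ W, phiT p k V w ∈ W := by
      intro w hw
      have hle : W.map (phiT p k V) ≤ W := by
        rw [hWdef, Submodule.map_span]
        apply Submodule.span_le.mpr
        rintro y ⟨z, ⟨i, rfl⟩, rfl⟩
        rw [← Efam_succ]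
        by_cases hi : (i : ℕ) + 1 < n
        · exact Submodule.subset_span ⟨⟨(i : ℕ) + 1, hi⟩, rfl⟩
        · have hieq : (i : ℕ) + 1 = n := by omega
          rw [hieq]
          exact hmem
      exact hle (Submodule.mem_map_of_mem hw)
    by_cases hcase : n ≤ σ0
    · have hWK : W ≤ K := Submodule.span_le.mpr (by
        rintro y ⟨i, rfl⟩
        exact hEK _ (lt_of_lt_of_le i.2 hcase))
      have hWne : W ≠ ⊥ := by
        rcases Nat.eq_zero_or_pos n with rfl | hnpos
        · exfalso
          have hrange : (Set.range fun i : Fin 0 => Efam e' (i : ℕ)) = ∅ := by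
            simp [Set.range_eq_empty]
          rw [hWdef, hrange, Submodule.span_empty, Submodule.mem_bot] at hmem
          exact he0 hmem
        · intro hbot
          have h0 : Efam e' 0 ∈ W := Submodule.subset_span ⟨⟨0, hnpos⟩, rfl⟩
          rw [hbot, Submodule.mem_bot] at h0
          exact he0 h0
      obtain ⟨x, hx0, hxW⟩ := stable_exists_point W hstab hWne
      have hxK : x ∈ KcapV K := hWK hxW
      rw [hstrict, Submodule.mem_bot] at hxK
      exact hx0 hxK
    · push_neg at hcase
      have hindσ : LinearIndependent k (fun i : Fin σ0 => Efam e' (i : ℕ)) := by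
        have hcomp := hprev.comp (fun i : Fin σ0 => Fin.castLE hcase.le i)
          (fun a b hab => by
            simpa [Fin.ext_iff] using congrArg (fun x : Fin n => (x : ℕ)) hab)
        exact hcomp
      have hKspan : Submodule.span k (Set.range fun i : Fin σ0 => Efam e' (i : ℕ)) = K := by
        apply Submodule.eq_of_le_of_finrank_le
        · apply Submodule.span_le.mpr
          rintro y ⟨i, rfl⟩
          exact hEK _ i.2
        · rw [hK.2.1, finrank_span_eq_card hindσ, Fintype.card_fin]
      have hWmaple : W.map (phiT p k V) ≤ W := by
        intro y hy
        obtain ⟨z, hz, rfl⟩ := hy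
        exact hstab z hz
      have hWfr : Module.finrank k W = n := by
        rw [hWdef, finrank_span_eq_card hprev, Fintype.card_fin]
      have haddhom : ∀ (r : k) (m : k ⊗[ZMod p] V),
          phiT p k V ((frobeniusEquiv k p).symm r • m) = r • phiT p k V m := by
        intro r m
        rw [phi_smul]
        congr 1
        have : frobenius k p ((frobeniusEquiv k p).symm r) = r :=
          (frobeniusEquiv k p).apply_symm_apply r
        simpa [frobenius_def] using this
      have hind2 : LinearIndependent k (fun i : Fin n => phiT p k V (Efam e' (i : ℕ))) := by
        have := hprev.map_of_injective_injective
          (fun r : k => (frobeniusEquiv k p).symm r)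
          (AddMonoidHom.mk' (phiT p k V) (map_add _))
          (fun r hr => by
            have := congrArg (frobenius k p) hr
            simpa using this)
          (fun m hm => (phi_bijective (p := p) (k := k) (V := V)).1
            (by simpa using hm))
          (fun r m => haddhom r m)
        exact this
      have hmapfr : Module.finrank k (W.map (phiT p k V)) = n := by
        rw [hWdef, Submodule.map_span]
        have himg : (phiT p k V) '' (Set.range fun i : Fin n => Efam e' (i : ℕ))
            = Set.range fun i : Fin n => phiT p k V (Efam e' (i : ℕ)) :=
          (Set.range_comp _ _).symm
        rw [himg, finrank_span_eq_card hind2, Fintype.card_fin]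
      have hWmap : W.map (phiT p k V) = W :=
        Submodule.eq_of_le_of_finrank_le hWmaple (by rw [hWfr, hmapfr])
      set Wo := (bV.baseChange k).orthogonal W with hWo
      have hKorth : (bV.baseChange k).orthogonal K = K := by
        have hKle : K ≤ (bV.baseChange k).orthogonal K := fun x hx y hy => hK.1 y hy x hx
        have hfr := LinearMap.BilinForm.finrank_orthogonal hbnd K
        exact (Submodule.eq_of_le_of_finrank_le hKle
          (by rw [hfr, hrk, hK.2.1]; omega)).symm
      have hWoK : Wo ≤ K := by
        have h1 : K ≤ W := by
          rw [← hKspan]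
          apply Submodule.span_le.mpr
          rintro y ⟨i, rfl⟩
          exact Submodule.subset_span ⟨Fin.castLE hcase.le i, rfl⟩
        have h2 : Wo ≤ (bV.baseChange k).orthogonal K :=
          LinearMap.BilinForm.orthogonal_le h1
        rw [hKorth] at h2
        exact h2
      have hWone : Wo ≠ ⊥ := by
        intro hbot
        have hfr := LinearMap.BilinForm.finrank_orthogonal hbnd W
        rw [← hWo, hbot, finrank_bot, hrk, hWfr] at hfr
        omega
      have hWostab : ∀ w ∈ Wo, phiT p k V w ∈ Wo := by
        intro w hw
        intro y hy
        rw [← hWmap] at hy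
        obtain ⟨z, hz, rfl⟩ := hy
        show bV.baseChange k (phiT p k V z) (phiT p k V w) = 0
        rw [pair_phi, hw z hz, zero_pow (Fact.out (p := p.Prime)).ne_zero]
      obtain ⟨x, hx0, hxW⟩ := stable_exists_point Wo hWostab hWone
      have hxK : x ∈ KcapV K := hWoK hxW
      rw [hstrict, Submodule.mem_bot] at hxK
      exact hx0 hxK

end AuxProof

set_option maxHeartbeats 2000000

theorem stmt4 (p : ℕ) [Fact p.Prime] (hp : p ≠ 2)
    (k : Type*) [Field k] [IsAlgClosed k] [CharP k p] [Algebra (ZMod p) k]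
    (σ0 : ℕ)
    (V : Type*) [AddCommGroup V] [Module (ZMod p) V]
    (bV : LinearMap.BilinForm (ZMod p) V)
    (hsymm : ∀ x y, bV x y = bV y x) (hnd : Nondeg bV) (hnn : NonNeutral bV)
    (hdim : Module.finrank (ZMod p) V = 2 * σ0)
    (K : Submodule k (k ⊗[ZMod p] V)) (hK : IsCharSub σ0 bV K)
    (hstrict : KcapV K = ⊥)
    (e : k ⊗[ZMod p] V)
    (hgen : (⨅ i ∈ Finset.range σ0, phiPow i K) = Submodule.span k {e})
    (he0 : e ≠ 0)
    (e' : k ⊗[ZMod p] V) (he' : (fun m => phiT p k V m)^[σ0 - 1] e' = e) :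
    ∃ f : UK K ≃+ k,
      ∀ B : Ugrp K, f (QuotientAddGroup.mk B) =
        bV.baseChange k (B : k ⊗[ZMod p] V) e' := by
  classical
  -- dispatch the degenerate case σ0 = 0
  rcases Nat.eq_zero_or_pos σ0 with hσ0 | hσ
  · exfalso
    subst hσ0
    have hgen' : (⊤ : Submodule k (k ⊗[ZMod p] V)) = Submodule.span k {e} := by
      simpa using hgen
    haveI hsfd : Module.Finite k (k ⊗[ZMod p] V) :=
      ⟨⟨{e}, by rw [Finset.coe_singleton]; exact hgen'.symm⟩⟩
    have hK0 : K = ⊥ := Submodule.finrank_eq_zero.mp hK.2.1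
    have h22 := hK.2.2
    rw [hK0] at h22
    rw [Submodule.map_bot, bot_sup_eq] at h22
    rw [finrank_bot] at h22
    exact absurd h22 (by norm_num)
  have hVfd : FiniteDimensional (ZMod p) V :=
    FiniteDimensional.of_finrank_pos (by omega)
  have hFDk : FiniteDimensional k (k ⊗[ZMod p] V) :=
    Module.Finite.of_basis (Algebra.TensorProduct.basis k (Module.Free.chooseBasis (ZMod p) V))
  have hrk : Module.finrank k (k ⊗[ZMod p] V) = 2 * σ0 := by
    rw [Module.finrank_baseChange, hdim]
  have hbnd : (bV.baseChange k).Nondegenerate := baseChange_nondeg bV hnd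
  have hrefl : (bV.baseChange k).IsRefl := by
    intro x y h
    rw [pair_symm bV hsymm] at h
    exact h
  have hpne : p ≠ 0 := (Fact.out (p := p.Prime)).ne_zero
  have he'0 : e' ≠ 0 := by
    intro h
    apply he0
    rw [← he', h, phi_iter_zero]
  have hEe : Efam e' (σ0 - 1) = e := he'
  have hEK : ∀ j, j < σ0 → Efam e' j ∈ K := by
    intro j hj
    have hmem : e ∈ phiPow (σ0 - 1 - j) K := by
      have h1 : e ∈ ⨅ i ∈ Finset.range σ0, phiPow i K := by
        rw [hgen]; exact Submodule.mem_span_singleton_self e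
      have h2 := (Submodule.mem_iInf _).mp h1 (σ0 - 1 - j)
      exact (Submodule.mem_iInf _).mp h2 (Finset.mem_range.mpr (by omega))
    obtain ⟨x, hxK, hx⟩ := mem_phiPow_iff.mp hmem
    have h2 : (fun m => phiT p k V m)^[σ0 - 1 - j] (Efam e' j) = e := by
      show (fun m => phiT p k V m)^[σ0 - 1 - j] ((fun m => phiT p k V m)^[j] e') = e
      rw [← Function.iterate_add_apply]
      have : σ0 - 1 - j + j = σ0 - 1 := by omega
      rw [this]
      exact hEe
    have hxE : x = Efam e' j := phi_iter_injective (σ0 - 1 - j) (by rw [h2, hx])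
    rw [← hxE]
    exact hxK
  have hind := efam_linearIndependent bV σ0 K e' hσ hsymm hnd hdim hK hstrict he'0 hEK
  haveI : Nonempty (Fin (2 * σ0)) := ⟨⟨0, by omega⟩⟩
  have hcard : Fintype.card (Fin (2 * σ0)) = Module.finrank k (k ⊗[ZMod p] V) := by
    rw [Fintype.card_fin, hrk]
  set Bas := basisOfLinearIndependentOfCardEqFinrank hind hcard with hBasdef
  have hBasE : ∀ i : Fin (2 * σ0), Bas i = Efam e' (i : ℕ) := by
    intro i
    rw [hBasdef, coe_basisOfLinearIndependentOfCardEqFinrank]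
  have hindσ : LinearIndependent k (fun i : Fin σ0 => Efam e' (i : ℕ)) := by
    have hcomp := hind.comp (fun i : Fin σ0 => Fin.castLE (by omega) i)
      (fun a b hab => by
        simpa [Fin.ext_iff] using congrArg (fun x : Fin (2 * σ0) => (x : ℕ)) hab)
    exact hcomp
  have hKspan : Submodule.span k (Set.range fun i : Fin σ0 => Efam e' (i : ℕ)) = K := by
    apply Submodule.eq_of_le_of_finrank_le
    · apply Submodule.span_le.mpr
      rintro y ⟨i, rfl⟩
      exact hEK _ i.2
    · rw [hK.2.1, finrank_span_eq_card hindσ, Fintype.card_fin]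
  have hKorth : (bV.baseChange k).orthogonal K = K := by
    have hKle : K ≤ (bV.baseChange k).orthogonal K := fun x hx y hy => hK.1 y hy x hx
    have hfr := LinearMap.BilinForm.finrank_orthogonal hbnd K
    exact (Submodule.eq_of_le_of_finrank_le hKle
      (by rw [hfr, hrk, hK.2.1]; omega)).symm
  -- the pairing values
  set A : ℕ → k := fun m => bV.baseChange k e' (Efam e' m) with hAdef
  have hpairE : ∀ i m : ℕ, bV.baseChange k (Efam e' i) (Efam e' (i + m)) = (A m) ^ (p ^ i) := by
    intro i m
    induction i with
    | zero => simp [Efam_zero, hAdef]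
    | succ i ih =>
      have hidx : i + 1 + m = (i + m) + 1 := by omega
      rw [hidx, Efam_succ, Efam_succ, pair_phi, ih, ← pow_mul, pow_succ]
  have hA0 : ∀ m, m < σ0 → A m = 0 := by
    intro m hm
    exact hK.1 _ (hEK 0 hσ) _ (hEK m hm)
  have hAσ : A σ0 ≠ 0 := by
    intro h0
    have hindσ1 : LinearIndependent k (fun i : Fin (σ0 + 1) => Efam e' (i : ℕ)) := by
      have hcomp := hind.comp (fun i : Fin (σ0 + 1) => Fin.castLE (by omega) i)
        (fun a b hab => by
          simpa [Fin.ext_iff] using congrArg (fun x : Fin (2 * σ0) => (x : ℕ)) hab)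
      exact hcomp
    set T := Submodule.span k (Set.range fun i : Fin (σ0 + 1) => Efam e' (i : ℕ)) with hTdef
    have hTpair : ∀ i j : ℕ, i ≤ j → j ≤ σ0 →
        bV.baseChange k (Efam e' i) (Efam e' j) = 0 := by
      intro i j hij hj
      have : j = i + (j - i) := by omega
      rw [this, hpairE]
      rcases Nat.lt_or_ge (j - i) σ0 with hlt | hge
      · rw [hA0 _ hlt, zero_pow (pow_ne_zero _ hpne)]
      · have : j - i = σ0 := by omega
        rw [this, h0, zero_pow (pow_ne_zero _ hpne)]
    have hTiso : ∀ x ∈ T, ∀ y ∈ T, bV.baseChange k x y = 0 := by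
      apply span_isotropic
      rintro x ⟨i, rfl⟩ y ⟨j, rfl⟩
      rcases le_total (i : ℕ) (j : ℕ) with hij | hij
      · exact hTpair _ _ hij (by omega)
      · rw [pair_symm bV hsymm]
        exact hTpair _ _ hij (by omega)
    have hTle : T ≤ (bV.baseChange k).orthogonal T := fun x hx y hy => hTiso y hy x hx
    have hTfr : Module.finrank k T = σ0 + 1 := by
      rw [hTdef, finrank_span_eq_card hindσ1, Fintype.card_fin]
    have hfro := LinearMap.BilinForm.finrank_orthogonal hbnd T
    have hmono := Submodule.finrank_mono hTle
    rw [hTfr] at hmono hfro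
    rw [hrk] at hfro
    omega
  -- the additive map on Ugrp K
  set u : Ugrp K →+ k := AddMonoidHom.mk'
    (fun B : Ugrp K => bV.baseChange k (B : k ⊗[ZMod p] V) e')
    (by
      intro B C
      show bV.baseChange k ((B + C : Ugrp K) : k ⊗[ZMod p] V) e'
          = bV.baseChange k (B : k ⊗[ZMod p] V) e' + bV.baseChange k (C : k ⊗[ZMod p] V) e'
      rw [AddSubgroup.coe_add, map_add, LinearMap.add_apply]) with hudef
  have hker0 : ∀ x : Ugrp K, (x : k ⊗[ZMod p] V) ∈ K → u x = 0 := by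
    intro x hx
    exact hK.1 _ hx _ (hEK 0 hσ)
  set f0 : UK K →+ k := QuotientAddGroup.lift _ u (by
    intro x hx
    exact hker0 x ((AddSubgroup.mem_addSubgroupOf).mp hx)) with hf0def
  have hf0mk : ∀ B : Ugrp K, f0 (QuotientAddGroup.mk B) =
      bV.baseChange k (B : k ⊗[ZMod p] V) e' := by
    intro B
    rfl
  -- injectivity
  have hinj : Function.Injective f0 := by
    rw [injective_iff_map_eq_zero]
    intro y hy
    obtain ⟨B, rfl⟩ := QuotientAddGroup.mk'_surjective _ y
    rw [QuotientAddGroup.mk'_apply] at hy ⊢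
    rw [hf0mk] at hy
    rw [QuotientAddGroup.eq_zero_iff]
    rw [AddSubgroup.mem_addSubgroupOf]
    -- show ↑B ∈ K
    have hBj : ∀ j : ℕ, j < σ0 → bV.baseChange k (B : k ⊗[ZMod p] V) (Efam e' j) = 0 := by
      intro j
      induction j with
      | zero => intro _; exact hy
      | succ j ihj =>
        intro hj
        have hjlt : j < σ0 := by omega
        have h1 : bV.baseChange k ((B : k ⊗[ZMod p] V) - phiT p k V B) (Efam e' (j + 1)) = 0 := by
          have hBU : (B : k ⊗[ZMod p] V) - phiT p k V B ∈ K ⊔ K.map (phiT p k V) := B.2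
          obtain ⟨y1, hy1, z, hz, hyz⟩ := Submodule.mem_sup.mp hBU
          obtain ⟨y2, hy2, rfl⟩ := Submodule.mem_map.mp hz
          rw [← hyz, map_add, LinearMap.add_apply]
          have ha : bV.baseChange k y1 (Efam e' (j + 1)) = 0 := by
            rw [pair_symm bV hsymm]
            exact hK.1 _ (hEK _ hj) _ hy1
          have hb : bV.baseChange k (phiT p k V y2) (Efam e' (j + 1)) = 0 := by
            rw [Efam_succ, pair_phi, hK.1 _ hy2 _ (hEK j hjlt), zero_pow hpne]
          rw [ha, hb, add_zero]
        have h2 : bV.baseChange k (phiT p k V (B : k ⊗[ZMod p] V)) (Efam e' (j + 1))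
            = (bV.baseChange k (B : k ⊗[ZMod p] V) (Efam e' j)) ^ p := by
          rw [Efam_succ, pair_phi]
        have h3 : bV.baseChange k (B : k ⊗[ZMod p] V) (Efam e' (j + 1))
            = bV.baseChange k ((B : k ⊗[ZMod p] V) - phiT p k V B) (Efam e' (j + 1))
              + bV.baseChange k (phiT p k V (B : k ⊗[ZMod p] V)) (Efam e' (j + 1)) := by
          rw [map_sub, LinearMap.sub_apply]
          ring
        rw [h3, h1, h2, ihj hjlt, zero_pow hpne, add_zero]
    have hBK : (B : k ⊗[ZMod p] V) ∈ (bV.baseChange k).orthogonal K := by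
      rw [LinearMap.BilinForm.mem_orthogonal_iff]
      intro n hn
      rw [← hKspan] at hn
      show bV.baseChange k n (B : k ⊗[ZMod p] V) = 0
      induction hn using Submodule.span_induction with
      | mem z hz =>
        obtain ⟨i, rfl⟩ := hz
        rw [pair_symm bV hsymm]
        exact hBj _ i.2
      | zero => simp
      | add a c _ _ ha hc => rw [map_add, LinearMap.add_apply, ha, hc, add_zero]
      | smul r a _ ha => rw [map_smul, LinearMap.smul_apply, ha, smul_zero]
    rw [hKorth] at hBK
    exact hBK
  have hp2 : 2 ≤ p := (Fact.out (p := p.Prime)).two_le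
  set lam : Fin (2*σ0) → k := fun i => Bas.repr (phiT p k V (Efam e' (2*σ0 - 1))) i with hlamdef
  set lamN : ℕ → k := fun i => if h : i < 2*σ0 then lam ⟨i, h⟩ else 0 with hlamNdef
  set rt : ℕ → k → k := fun m c => (⇑(frobeniusEquiv k p).symm)^[m] c with hrtdef
  have hrt0 : ∀ c, rt 0 c = c := fun c => rfl
  have hrtsucc : ∀ m c, (rt (m+1) c) ^ p = rt m c := by
    intro m c
    have h1 : rt (m+1) c = (frobeniusEquiv k p).symm (rt m c) := by
      rw [hrtdef]
      exact Function.iterate_succ_apply' _ m c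
    rw [h1]
    have h2 := (frobeniusEquiv k p).apply_symm_apply (rt m c)
    rwa [coe_frobeniusEquiv, frobenius_def] at h2
  set G : ℕ → Polynomial k := fun j =>
    Polynomial.X ^ (p ^ (j - σ0)) -
      ∑ i ∈ Finset.Ico (j+1) (2*σ0),
        Polynomial.C (rt (i - j) (lamN i)) * Polynomial.X ^ (p ^ (σ0 + j - i)) with hGdef
  set g : ℕ → k → k := fun j ρ => Polynomial.eval ρ (G j) with hgdef
  have hgeval : ∀ j ρ, g j ρ = ρ ^ (p ^ (j - σ0)) -
      ∑ i ∈ Finset.Ico (j+1) (2*σ0), rt (i - j) (lamN i) * ρ ^ (p ^ (σ0 + j - i)) := by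
    intro j ρ
    simp only [hgdef, hGdef]
    rw [Polynomial.eval_sub, Polynomial.eval_pow, Polynomial.eval_X, Polynomial.eval_finset_sum]
    congr 1
    refine Finset.sum_congr rfl fun i _ => ?_
    rw [Polynomial.eval_mul, Polynomial.eval_C, Polynomial.eval_pow, Polynomial.eval_X]
  have hgtop : ∀ ρ, g (2*σ0 - 1) ρ = ρ ^ (p ^ (σ0 - 1)) := by
    intro ρ
    rw [hgeval]
    have h1 : 2*σ0 - 1 + 1 = 2*σ0 := by omega
    rw [h1, Finset.Ico_self, Finset.sum_empty, sub_zero]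
    congr 2
    omega
  have hgtopp : ∀ ρ, (g (2*σ0 - 1) ρ) ^ p = ρ ^ (p ^ σ0) := by
    intro ρ
    rw [hgtop, ← pow_mul]
    congr 1
    rw [← pow_succ]
    congr 1
    omega
  have hgstep : ∀ j, σ0 + 1 ≤ j → j ≤ 2*σ0 - 1 → ∀ ρ,
      g j ρ - (g (j-1) ρ) ^ p = lamN j * ρ ^ (p ^ σ0) := by
    intro j hj1 hj2 ρ
    rw [hgeval, hgeval, sub_pow_char, sum_pow_char]
    have hjm : j - 1 + 1 = j := by omega
    rw [hjm]
    have hterm : ∀ i ∈ Finset.Ico j (2*σ0),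
        (rt (i - (j-1)) (lamN i) * ρ ^ (p ^ (σ0 + (j-1) - i))) ^ p
          = rt (i - j) (lamN i) * ρ ^ (p ^ (σ0 + j - i)) := by
      intro i hi
      obtain ⟨hi1, hi2⟩ := Finset.mem_Ico.mp hi
      rw [mul_pow]
      congr 1
      · have : i - (j-1) = (i - j) + 1 := by omega
        rw [this, hrtsucc]
      · rw [← pow_mul, ← pow_succ]
        have hee : σ0 + (j - 1) - i + 1 = σ0 + j - i := by omega
        rw [hee]
    rw [Finset.sum_congr rfl hterm]
    have hfirstp : (ρ ^ (p ^ (j - 1 - σ0))) ^ p = ρ ^ (p ^ (j - σ0)) := by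
      rw [← pow_mul, ← pow_succ]
      have hee : j - 1 - σ0 + 1 = j - σ0 := by omega
      rw [hee]
    rw [hfirstp]
    rw [Finset.sum_eq_sum_Ico_succ_bot (by omega : j < 2*σ0)
      (fun i => rt (i - j) (lamN i) * ρ ^ (p ^ (σ0 + j - i)))]
    have hjj : j - j = 0 := by omega
    have hjj2 : σ0 + j - j = σ0 := by omega
    rw [hjj, hjj2, hrt0]
    ring
  set Bf : k → k ⊗[ZMod p] V := fun ρ => ∑ j ∈ Finset.Ico σ0 (2*σ0), g j ρ • Efam e' j
    with hBfdef
  have hLS : phiT p k V (Efam e' (2*σ0 - 1))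
      = ∑ j ∈ Finset.range (2*σ0), lamN j • Efam e' j := by
    conv_lhs => rw [← Bas.sum_repr (phiT p k V (Efam e' (2*σ0 - 1)))]
    rw [← Fin.sum_univ_eq_sum_range (fun j => lamN j • Efam e' j) (2*σ0)]
    refine Finset.sum_congr rfl fun i _ => ?_
    rw [hBasE]
    congr 1
    simp only [hlamNdef]
    rw [dif_pos i.2]
  have hphiBf : ∀ ρ, phiT p k V (Bf ρ) =
      (∑ j ∈ Finset.Ico σ0 (2*σ0 - 1), (g j ρ) ^ p • Efam e' (j+1))
        + (ρ ^ (p ^ σ0)) • ∑ j ∈ Finset.range (2*σ0), lamN j • Efam e' j := by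
    intro ρ
    simp only [hBfdef]
    rw [map_sum]
    have hsplit : Finset.Ico σ0 (2*σ0) = Finset.Ico σ0 ((2*σ0 - 1) + 1) := by
      congr 1
      omega
    rw [hsplit, Finset.sum_Ico_succ_top (by omega : σ0 ≤ 2*σ0 - 1)]
    congr 1
    · refine Finset.sum_congr rfl fun j _ => ?_
      rw [phi_smul, ← Efam_succ]
    · rw [phi_smul, hLS, hgtopp]
  have hmid : ∀ ρ, ∑ j ∈ Finset.Ico σ0 (2*σ0 - 1), (g j ρ) ^ p • Efam e' (j+1)
      = ∑ j ∈ Finset.Ico (σ0+1) (2*σ0), (g (j-1) ρ) ^ p • Efam e' j := by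
    intro ρ
    have h1 := Finset.sum_Ico_add_right_sub_eq (f := fun x => (g x ρ) ^ p • Efam e' (x+1))
      σ0 (2*σ0 - 1) 1
    have h2 : 2*σ0 - 1 + 1 = 2*σ0 := by omega
    rw [h2] at h1
    rw [← h1]
    refine Finset.sum_congr rfl fun j hj => ?_
    obtain ⟨hj1, hj2⟩ := Finset.mem_Ico.mp hj
    have : j - 1 + 1 = j := by omega
    rw [this]
  have hD : ∀ ρ, Bf ρ - phiT p k V (Bf ρ) = ∑ j ∈ Finset.range (2*σ0),
      ((if σ0 ≤ j then g j ρ else 0) - (if σ0 + 1 ≤ j then (g (j-1) ρ) ^ p else 0)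
        - ρ ^ (p ^ σ0) * lamN j) • Efam e' j := by
    intro ρ
    rw [hphiBf, hmid]
    have e1 : Bf ρ = ∑ j ∈ Finset.range (2*σ0), (if σ0 ≤ j then g j ρ else 0) • Efam e' j := by
      simp only [hBfdef]
      rw [Finset.range_eq_Ico]
      rw [← Finset.sum_subset (Finset.Ico_subset_Ico (Nat.zero_le σ0) le_rfl)
        (fun x _ hx => ?_)]
      · refine Finset.sum_congr rfl fun j hj => ?_
        rw [if_pos (Finset.mem_Ico.mp hj).1]
      · have : ¬ σ0 ≤ x := fun h => hx (Finset.mem_Ico.mpr ⟨h, (Finset.mem_Ico.mp ‹x ∈ Finset.Ico 0 (2*σ0)›).2⟩)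
        rw [if_neg this, zero_smul]
    have e2 : ∑ j ∈ Finset.Ico (σ0+1) (2*σ0), (g (j-1) ρ) ^ p • Efam e' j
        = ∑ j ∈ Finset.range (2*σ0), (if σ0 + 1 ≤ j then (g (j-1) ρ) ^ p else 0) • Efam e' j := by
      rw [Finset.range_eq_Ico]
      rw [← Finset.sum_subset (Finset.Ico_subset_Ico (Nat.zero_le (σ0+1)) le_rfl)
        (fun x hx1 hx => ?_)]
      · refine Finset.sum_congr rfl fun j hj => ?_
        rw [if_pos (Finset.mem_Ico.mp hj).1]
      · have : ¬ σ0 + 1 ≤ x := fun h => hx (Finset.mem_Ico.mpr ⟨h, (Finset.mem_Ico.mp hx1).2⟩)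
        rw [if_neg this, zero_smul]
    have e3 : (ρ ^ (p ^ σ0)) • ∑ j ∈ Finset.range (2*σ0), lamN j • Efam e' j
        = ∑ j ∈ Finset.range (2*σ0), (ρ ^ (p ^ σ0) * lamN j) • Efam e' j := by
      rw [Finset.smul_sum]
      refine Finset.sum_congr rfl fun j _ => ?_
      rw [smul_smul]
    rw [e1, e2, e3, sub_add_eq_sub_sub, ← Finset.sum_sub_distrib, ← Finset.sum_sub_distrib]
    refine Finset.sum_congr rfl fun j _ => ?_
    exact ((sub_smul _ _ _).trans (congrArg (· - _) (sub_smul _ _ _))).symm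
  have hUmem : ∀ ρ, Bf ρ ∈ Ugrp K := by
    intro ρ
    rw [mem_Ugrp]
    have hDm := hD ρ
    rw [hDm]
    apply Submodule.sum_mem
    intro j hj
    have hjN : j < 2*σ0 := Finset.mem_range.mp hj
    rcases Nat.lt_or_ge j σ0 with hjlt | hjge
    · exact Submodule.smul_mem _ _ (Submodule.mem_sup_left (hEK j hjlt))
    · rcases Nat.eq_or_lt_of_le hjge with heq | hgt
      · apply Submodule.smul_mem
        apply Submodule.mem_sup_right
        have hE : Efam e' j = phiT p k V (Efam e' (σ0 - 1)) := by
          rw [← Efam_succ]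
          congr 1
          omega
        rw [hE]
        exact Submodule.mem_map_of_mem (hEK _ (by omega))
      · have hcoef : (if σ0 ≤ j then g j ρ else 0)
            - (if σ0 + 1 ≤ j then (g (j-1) ρ) ^ p else 0) - ρ ^ (p ^ σ0) * lamN j = 0 := by
          rw [if_pos (by omega), if_pos (by omega)]
          have hst := hgstep j (by omega) (by omega) ρ
          linear_combination hst
        rw [hcoef, zero_smul]
        exact Submodule.zero_mem _
  set q : Polynomial k := ∑ j ∈ Finset.Ico σ0 (2*σ0), Polynomial.C (A j) * G j with hqdef
  have hueval : ∀ ρ, bV.baseChange k (Bf ρ) e' = Polynomial.eval ρ q := by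
    intro ρ
    simp only [hBfdef, hqdef]
    rw [map_sum, LinearMap.sum_apply, Polynomial.eval_finset_sum]
    refine Finset.sum_congr rfl fun j hj => ?_
    rw [map_smul, LinearMap.smul_apply, smul_eq_mul, Polynomial.eval_mul, Polynomial.eval_C]
    have hEA : bV.baseChange k (Efam e' j) e' = A j := by
      rw [pair_symm bV hsymm, hAdef]
    rw [hEA, hgdef]
    ring
  have hcoeffq : q.coeff 1 = A σ0 := by
    rw [hqdef, Polynomial.finset_sum_coeff]
    have hterm : ∀ j ∈ Finset.Ico σ0 (2*σ0),
        (Polynomial.C (A j) * G j).coeff 1 = if j = σ0 then A σ0 else 0 := by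
      intro j hj
      obtain ⟨hj1, hj2⟩ := Finset.mem_Ico.mp hj
      rw [Polynomial.coeff_C_mul]
      simp only [hGdef]
      rw [Polynomial.coeff_sub, Polynomial.coeff_X_pow, Polynomial.finset_sum_coeff]
      have hz : ∀ i ∈ Finset.Ico (j+1) (2*σ0),
          (Polynomial.C (rt (i - j) (lamN i)) * Polynomial.X ^ (p ^ (σ0 + j - i))).coeff 1
            = 0 := by
        intro i hi
        obtain ⟨hi1, hi2⟩ := Finset.mem_Ico.mp hi
        rw [Polynomial.coeff_C_mul, Polynomial.coeff_X_pow, if_neg, mul_zero]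
        intro h1
        have h2 : σ0 + j - i ≠ 0 := by omega
        have h3 := Nat.one_lt_pow h2 (by omega : 1 < p)
        omega
      rw [Finset.sum_eq_zero hz, sub_zero]
      by_cases hjσ : j = σ0
      · subst hjσ
        rw [if_pos (by simp), if_pos rfl, mul_one]
      · rw [if_neg, mul_zero, if_neg hjσ]
        intro h1
        have h2 : j - σ0 ≠ 0 := by omega
        have h3 := Nat.one_lt_pow h2 (by omega : 1 < p)
        omega
    rw [Finset.sum_congr rfl hterm]
    have := Finset.sum_ite_eq' (Finset.Ico σ0 (2*σ0)) σ0 (fun _ => A σ0)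
    rw [this, if_pos (Finset.mem_Ico.mpr ⟨le_rfl, by omega⟩)]
  have hsurj : Function.Surjective f0 := by
    intro t
    set q' := q - Polynomial.C t with hq'def
    have hc1 : q'.coeff 1 = A σ0 := by
      rw [hq'def, Polynomial.coeff_sub, Polynomial.coeff_C, if_neg one_ne_zero, sub_zero,
        hcoeffq]
    have hdeg : q'.degree ≠ 0 := by
      intro h
      have h1 : q'.natDegree = 0 :=
        Polynomial.natDegree_eq_zero_iff_degree_le_zero.mpr (le_of_eq h)
      have h2 : 1 ≤ q'.natDegree :=
        Polynomial.le_natDegree_of_ne_zero (by rw [hc1]; exact hAσ)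
      omega
    obtain ⟨ρ, hρ⟩ := IsAlgClosed.exists_root q' hdeg
    have hval : Polynomial.eval ρ q = t := by
      have h1 : Polynomial.eval ρ q' = 0 := hρ
      rw [hq'def, Polynomial.eval_sub, Polynomial.eval_C, sub_eq_zero] at h1
      exact h1
    refine ⟨QuotientAddGroup.mk ⟨Bf ρ, hUmem ρ⟩, ?_⟩
    exact (hf0mk ⟨Bf ρ, hUmem ρ⟩).trans ((hueval ρ).trans hval)
  refine ⟨AddEquiv.ofBijective f0 ⟨hinj, hsurj⟩, ?_⟩
  intro B
  exact hf0mk B
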